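/- Let (X,d) be a complete metric space and T : X → X be a (φ,F)-contraction. Suppose T is contractive, F : (0,∞) → ℝ has a finite right-hand limit at every point of (0,∞), and φ : (0,∞) → (0,∞) satisfies condition (iii'). Then T is a CJMP-contraction. -/

import Mathlib

open Filter Topology

/-- `T` is a Picard operator: it has a unique fixed point `u` and every
sequence of iterates converges to `u`. -/
def IsPicardOperator {X : Type*} [MetricSpace X] (T : X → X) : Prop :=
  ∃ u : X, T u = u ∧ (∀ v : X, T v = v → v = u) ∧
    ∀ x : X, Tendsto (fun n => T^[n] x) atTop (𝓝 u)

/-- `T` is contractive: `d(Tx,Ty) < d(x,y)` whenever `x ≠ y`. -/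
def Contractive {X : Type*} [MetricSpace X] (T : X → X) : Prop :=
  ∀ x y : X, x ≠ y → dist (T x) (T y) < dist x y

/-- The Matkowski–Węgrzyk condition. -/
def MWCondition {X : Type*} [MetricSpace X] (T : X → X) : Prop :=
  ∀ ε > (0 : ℝ), ∃ δ > (0 : ℝ), ∀ x y : X,
    ε < dist x y → dist x y < ε + δ → dist (T x) (T y) ≤ ε

/-- `T` is a CJMP-contraction. -/
def IsCJMP {X : Type*} [MetricSpace X] (T : X → X) : Prop :=
  Contractive T ∧ MWCondition T

theorem stmt_11 {X : Type*} [MetricSpace X] [CompleteSpace X] (T : X → X)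
    (hT : Contractive T) (F φ : ℝ → ℝ) (hφpos : ∀ t > (0 : ℝ), 0 < φ t)
    (hF : ∀ t > (0 : ℝ), ∃ L : ℝ, Tendsto F (𝓝[>] t) (𝓝 L))
    (hiii : ∀ t > (0 : ℝ), ∀ tn : ℕ → ℝ, (∀ n, t < tn n) → Tendsto tn atTop (𝓝 t) →
      0 < limsup (fun n => φ (tn n)) atTop)
    (hcontr : ∀ x y : X, T x ≠ T y →
      φ (dist x y) + F (dist (T x) (T y)) ≤ F (dist x y)) :
    IsCJMP T := by
  refine ⟨hT, ?_⟩
  intro ε hε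
  by_contra h
  push_neg at h
  choose x y h1 h2 h3 using fun n : ℕ => h (1 / (n + 1 : ℝ)) (by positivity)
  set tn : ℕ → ℝ := fun n => dist (x n) (y n) with htn_def
  set sn : ℕ → ℝ := fun n => dist (T (x n)) (T (y n)) with hsn_def
  have hlim : Tendsto (fun n : ℕ => ε + 1 / (n + 1 : ℝ)) atTop (𝓝 ε) := by
    have := tendsto_one_div_add_atTop_nhds_zero_nat (𝕜 := ℝ)
    simpa using (tendsto_const_nhds.add this)
  have htn : Tendsto tn atTop (𝓝 ε) :=
    tendsto_of_tendsto_of_tendsto_of_le_of_le tendsto_const_nhds hlim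
      (fun n => (h1 n).le) (fun n => (h2 n).le)
  have hst : ∀ n, sn n < tn n := fun n =>
    hT (x n) (y n) (by
      intro hxy
      have := h1 n
      simp [htn_def, hxy] at this
      linarith)
  have hsn : Tendsto sn atTop (𝓝 ε) :=
    tendsto_of_tendsto_of_tendsto_of_le_of_le tendsto_const_nhds hlim
      (fun n => (h3 n).le) (fun n => (hst n).le.trans (h2 n).le)
  obtain ⟨L, hL⟩ := hF ε hε
  have hFt : Tendsto (fun n => F (tn n)) atTop (𝓝 L) :=
    hL.comp (tendsto_nhdsWithin_iff.mpr ⟨htn, Eventually.of_forall fun n => h1 n⟩)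
  have hFs : Tendsto (fun n => F (sn n)) atTop (𝓝 L) :=
    hL.comp (tendsto_nhdsWithin_iff.mpr ⟨hsn, Eventually.of_forall fun n => h3 n⟩)
  have hg : Tendsto (fun n => F (tn n) - F (sn n)) atTop (𝓝 0) := by
    simpa using hFt.sub hFs
  have hle : ∀ n, φ (tn n) ≤ F (tn n) - F (sn n) := by
    intro n
    have hne : T (x n) ≠ T (y n) := by
      intro hxy
      have := h3 n
      simp [hsn_def, hxy] at this
      linarith
    have := hcontr (x n) (y n) hne
    linarith
  have hphi0 : Tendsto (fun n => φ (tn n)) atTop (𝓝 0) :=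
    squeeze_zero (fun n => (hφpos _ (hε.trans (h1 n))).le) hle hg
  have := hiii ε hε tn h1 htn
  rw [hphi0.limsup_eq] at this
  exact lt_irrefl _ this
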